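/- Let n ≥ 1 be an integer and ρ > 0. Define T(K) = K(1+K)/(n(1+nK)) for K > 0 and the Rician capacity upper bound U(K) = log₂(1 + (n(1+nK)/(K+1))·(n·min(ρ/n, T(K)) + max(ρ/n − T(K), 0))) + (n−1)·log₂(1 + (n/(1+K))·max(ρ/n − T(K), 0)). Then U(K) tends to log₂(1 + n²·ρ) as K → +∞. (This is the limit of the n × n Rician MIMO capacity upper bound as the absorption coefficient k(f) → 0, i.e. the pure line-of-sight limit.) -/

import Mathlib

set_option maxHeartbeats 1000000


/-- The Rician MIMO capacity upper bound `U(K)` tends to `log₂ (1 + n² ρ)` as the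
Rician K-factor `K → +∞` (the pure line-of-sight limit `k(f) → 0`). -/
theorem rician_upper_bound_limit_K_to_infty
    (n : ℕ) (hn : 1 ≤ n) (ρ : ℝ) (hρ : 0 < ρ) :
    Filter.Tendsto (fun K : ℝ =>
        Real.logb 2 (1 + ((n : ℝ) * (1 + n * K) / (K + 1)) *
          ((n : ℝ) * min (ρ / n) (K * (1 + K) / ((n : ℝ) * (1 + n * K))) +
            max (ρ / n - K * (1 + K) / ((n : ℝ) * (1 + n * K))) 0)) +
        ((n : ℝ) - 1) * Real.logb 2 (1 + ((n : ℝ) / (1 + K)) *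
          max (ρ / n - K * (1 + K) / ((n : ℝ) * (1 + n * K))) 0))
      Filter.atTop
      (nhds (Real.logb 2 (1 + (n : ℝ) ^ 2 * ρ))) := by
  have hn' : (1:ℝ) ≤ (n:ℝ) := by exact_mod_cast hn
  have hn0 : (0:ℝ) < (n:ℝ) := by linarith
  -- the ratio tends to n^2
  have h1 : Filter.Tendsto (fun K : ℝ => (n:ℝ) * (1 + n * K) / (K + 1))
      Filter.atTop (nhds ((n:ℝ)^2)) := by
    have heq : ∀ᶠ K in Filter.atTop,
        (n:ℝ) * ((n:ℝ) + (1 - n) * (K + 1)⁻¹) = (n:ℝ) * (1 + n * K) / (K + 1) := by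
      filter_upwards [Filter.eventually_gt_atTop (0:ℝ)] with K hK
      have h : K + 1 ≠ 0 := by linarith
      field_simp
      ring_nf
    have h2 : Filter.Tendsto (fun K : ℝ => (n:ℝ) * ((n:ℝ) + (1 - n) * (K + 1)⁻¹))
        Filter.atTop (nhds ((n:ℝ) * ((n:ℝ) + (1 - n) * 0))) := by
      apply Filter.Tendsto.const_mul
      apply Filter.Tendsto.const_add
      apply Filter.Tendsto.const_mul
      exact (Filter.tendsto_atTop_add_const_right _ 1 Filter.tendsto_id).inv_tendsto_atTop
    simpa [pow_two] using h2.congr' heq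
  -- composed limit
  have hpos : (0:ℝ) < 1 + (n:ℝ)^2 * ρ := by positivity
  have h2 : Filter.Tendsto (fun K : ℝ => 1 + (n:ℝ) * (1 + n * K) / (K + 1) * ρ)
      Filter.atTop (nhds (1 + (n:ℝ)^2 * ρ)) :=
    Filter.Tendsto.const_add 1 (h1.mul_const ρ)
  have hmain : Filter.Tendsto (fun K : ℝ =>
      Real.logb 2 (1 + (n:ℝ) * (1 + n * K) / (K + 1) * ρ))
      Filter.atTop (nhds (Real.logb 2 (1 + (n:ℝ)^2 * ρ))) :=
    (Real.continuousAt_logb (ne_of_gt hpos)).tendsto.comp h2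
  -- eventual equality
  apply hmain.congr'
  filter_upwards [Filter.eventually_ge_atTop ((n:ℝ) * ρ),
    Filter.eventually_gt_atTop (0:ℝ)] with K hK1 hK0
  have hden : (0:ℝ) < (n:ℝ) * (1 + n * K) := by positivity
  have hT : ρ / n ≤ K * (1 + K) / ((n : ℝ) * (1 + n * K)) := by
    rw [div_le_div_iff₀ hn0 hden]
    have a2 : ((n:ℝ) * ρ) * ((n:ℝ) * K) ≤ K * ((n:ℝ) * K) :=
      mul_le_mul_of_nonneg_right hK1 (by positivity)
    have a3 : K ≤ K * n := le_mul_of_one_le_right hK0.le hn'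
    nlinarith [a2, a3, hK1]
  rw [min_eq_left hT, max_eq_right (by linarith : ρ / n - K * (1 + K) / ((n : ℝ) * (1 + n * K)) ≤ 0)]
  have hnρ : (n:ℝ) * (ρ / n) = ρ := mul_div_cancel₀ ρ (ne_of_gt hn0)
  simp [hnρ]
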